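/- Let E and F be vector lattices and let a and A be n-multilinear maps from E^n to F such that |a(x_1,…,x_n)| ≤ A(X_1,…,X_n) whenever |x_i| ≤ X_i for i = 1,…,n. Then for all x, h, X, H ∈ E with |x| ≤ X and |h| ≤ H, the diagonal values satisfy |a(x+h,…,x+h) − a(x,…,x)| ≤ A(X+H,…,X+H) − A(X,…,X). -/

import Mathlib

/-- Triangle inequality for sums in a lattice-ordered additive group. -/
lemma abs_sum_le_sum_abs' {ι F : Type*} [Lattice F] [AddCommGroup F]
    [CovariantClass F F (· + ·) (· ≤ ·)] (t : Finset ι) (f : ι → F) :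
    |∑ i ∈ t, f i| ≤ ∑ i ∈ t, |f i| := by
  classical
  induction t using Finset.cons_induction with
  | empty => simp
  | cons i t hi ih =>
    rw [Finset.sum_cons, Finset.sum_cons]
    exact (abs_add_le _ _).trans (add_le_add le_rfl ih)

/-- Kantorovich's inequality for a majorized multilinear coefficient: if
`|a (x₁, …, xₙ)| ≤ A (X₁, …, Xₙ)` whenever `|xᵢ| ≤ Xᵢ`, then on the diagonal
`|a (x+h, …, x+h) - a (x, …, x)| ≤ A (X+H, …, X+H) - A (X, …, X)`
whenever `|x| ≤ X` and `|h| ≤ H`. -/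
theorem stmt_5 {E F : Type*} (n : ℕ)
    [Lattice E] [AddCommGroup E] [Module ℝ E]
    [CovariantClass E E (· + ·) (· ≤ ·)]
    [Lattice F] [AddCommGroup F] [Module ℝ F]
    [CovariantClass F F (· + ·) (· ≤ ·)]
    (hsmulE : ∀ (c : ℝ) (v : E), 0 ≤ c → 0 ≤ v → 0 ≤ c • v)
    (hsmulF : ∀ (c : ℝ) (w : F), 0 ≤ c → 0 ≤ w → 0 ≤ c • w)
    (a A : MultilinearMap ℝ (fun _ : Fin n => E) F)
    (hmaj : ∀ (x X : Fin n → E), (∀ i, |x i| ≤ X i) → |a x| ≤ A X)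
    (x h X H : E) (hx : |x| ≤ X) (hh : |h| ≤ H) :
    |a (fun _ => x + h) - a (fun _ => x)|
      ≤ A (fun _ => X + H) - A (fun _ => X) := by
  classical
  -- expand `a` and `A` on the diagonal sums using multilinearity over all coordinates
  have ha : a (fun _ => x + h)
      = ∑ s : Finset (Fin n), a (s.piecewise (fun _ => h) (fun _ => x)) := by
    have := a.map_add_univ (fun _ => h) (fun _ => x)
    simpa [Pi.add_def, add_comm] using this
  have hA : A (fun _ => X + H)
      = ∑ s : Finset (Fin n), A (s.piecewise (fun _ => H) (fun _ => X)) := by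
    have := A.map_add_univ (fun _ => H) (fun _ => X)
    simpa [Pi.add_def, add_comm] using this
  have hmem : (∅ : Finset (Fin n)) ∈ (Finset.univ : Finset (Finset (Fin n))) :=
    Finset.mem_univ _
  have ha' : a (fun _ => x + h) - a (fun _ => x)
      = ∑ s ∈ Finset.univ.erase (∅ : Finset (Fin n)),
          a (s.piecewise (fun _ => h) (fun _ => x)) := by
    rw [ha, ← Finset.add_sum_erase _ _ hmem, Finset.piecewise_empty]
    abel
  have hA' : A (fun _ => X + H) - A (fun _ => X)
      = ∑ s ∈ Finset.univ.erase (∅ : Finset (Fin n)),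
          A (s.piecewise (fun _ => H) (fun _ => X)) := by
    rw [hA, ← Finset.add_sum_erase _ _ hmem, Finset.piecewise_empty]
    abel
  rw [ha', hA']
  have hb : ∀ s ∈ Finset.univ.erase (∅ : Finset (Fin n)),
      |a (s.piecewise (fun _ => h) (fun _ => x))|
        ≤ A (s.piecewise (fun _ => H) (fun _ => X)) := by
    intro s _
    refine hmaj _ _ fun i => ?_
    by_cases hi : i ∈ s <;> simp [Finset.piecewise, hi, hx, hh]
  letI : IsOrderedAddMonoid F :=
    { add_le_add_left := by intro a b hab c; gcongr }
  exact (abs_sum_le_sum_abs' _ _).trans (Finset.sum_le_sum hb)
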